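/- Let d ≥ 1 and u, v ∈ ℝ^d. Let a = (1, …, 1) ∈ ℝ^d and let R denote the orthogonal projection onto the hyperplane a^⊥ = {x : Σ_j x_j = 0}, i.e. R x = x − (Σ_j x_j / d) a. Assume R u ≠ 0, R v ≠ 0, and that there is no t > 0 with R u = −t · R v. Then there exists x ∈ ℤ^d with Σ_j x_j = 0, Σ_j x_j u_j > 0, and Σ_j x_j v_j > 0. -/

import Mathlib

/-- The geometric lemma in the proof of Theorem 1: if the projections of `u`
and `v` onto the hyperplane orthogonal to the all-ones vector are nonzero and
not negative multiples of each other, then there is an integer vector `x`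
orthogonal to the all-ones vector with positive inner product with both `u`
and `v`. -/
theorem stmt_2 (d : ℕ) (hd : 1 ≤ d) (u v : Fin d → ℝ)
    (hu : (fun j => u j - (∑ i, u i) / d) ≠ 0)
    (hv : (fun j => v j - (∑ i, v i) / d) ≠ 0)
    (hnot : ¬ ∃ t : ℝ, 0 < t ∧
      (fun j => u j - (∑ i, u i) / d) = (fun j => -t * (v j - (∑ i, v i) / d))) :
    ∃ x : Fin d → ℤ, (∑ j, x j) = 0 ∧
      0 < ∑ j, (x j : ℝ) * u j ∧ 0 < ∑ j, (x j : ℝ) * v j := by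
  have hd0 : (d : ℝ) ≠ 0 := by positivity
  set U : EuclideanSpace ℝ (Fin d) := WithLp.toLp 2 (fun j => u j - (∑ i, u i) / d) with hUdef
  set V : EuclideanSpace ℝ (Fin d) := WithLp.toLp 2 (fun j => v j - (∑ i, v i) / d) with hVdef
  have hU0 : U ≠ 0 := by
    intro h; apply hu; simpa [hUdef] using congrArg WithLp.ofLp h
  have hV0 : V ≠ 0 := by
    intro h; apply hv; simpa [hVdef] using congrArg WithLp.ofLp h
  have hnU : (0 : ℝ) < ‖U‖ := norm_pos_iff.mpr hU0
  have hnV : (0 : ℝ) < ‖V‖ := norm_pos_iff.mpr hV0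
  have hinner : (inner ℝ U V : ℝ) = ∑ j, U j * V j := by
    simp [PiLp.inner_apply, RCLike.inner_apply, mul_comm]
  -- strict Cauchy-Schwarz
  have hCS : -(‖U‖ * ‖V‖) < (inner ℝ U V : ℝ) := by
    rcases lt_or_eq_of_le (neg_le_of_neg_le (abs_le.mp (abs_real_inner_le_norm U V)).1) with h | h
    · linarith [ (abs_le.mp (abs_real_inner_le_norm U V)).1 ]
    · exfalso
      have h' : (inner ℝ U (-V) : ℝ) = ‖U‖ * ‖-V‖ := by
        rw [inner_neg_right]; rw [norm_neg]; linarith [(abs_le.mp (abs_real_inner_le_norm U V)).1, h]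
      rw [inner_eq_norm_mul_iff_real] at h'
      apply hnot
      refine ⟨‖U‖ / ‖V‖, by positivity, ?_⟩
      funext j
      have := congrArg (fun w : EuclideanSpace ℝ (Fin d) => w j) h'
      simp only [norm_neg, PiLp.smul_apply, smul_eq_mul, PiLp.neg_apply] at this
      have hj : U j = -(‖U‖ / ‖V‖) * V j := by
        field_simp at this ⊢
        linarith
      simpa [hUdef, hVdef] using hj
  have key : 0 < ‖U‖ * ‖V‖ + (inner ℝ U V : ℝ) := by linarith
  -- the real direction
  set x₀ : Fin d → ℝ := fun j => U j / ‖U‖ + V j / ‖V‖ with hx₀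
  have hnormU : (∑ j, U j * U j) = ‖U‖ * ‖U‖ := by
    rw [← real_inner_self_eq_norm_mul_norm]
    simp [PiLp.inner_apply, RCLike.inner_apply, mul_comm]
    rw [EuclideanSpace.norm_eq, Real.sq_sqrt (by positivity)]; simp [sq]
  have hnormV : (∑ j, V j * V j) = ‖V‖ * ‖V‖ := by
    rw [← real_inner_self_eq_norm_mul_norm]
    simp [PiLp.inner_apply, RCLike.inner_apply, mul_comm]
    rw [EuclideanSpace.norm_eq, Real.sq_sqrt (by positivity)]; simp [sq]
  have hA : (∑ j, x₀ j * U j) = (‖U‖ * ‖V‖ + (inner ℝ U V : ℝ)) / ‖V‖ := by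
    have : (∑ j, x₀ j * U j) = (∑ j, U j * U j) / ‖U‖ + (∑ j, U j * V j) / ‖V‖ := by
      rw [Finset.sum_div, Finset.sum_div, ← Finset.sum_add_distrib]
      congr 1; funext j; simp [hx₀]; ring
    rw [this, hnormU, ← hinner]
    field_simp
  have hB : (∑ j, x₀ j * V j) = (‖U‖ * ‖V‖ + (inner ℝ U V : ℝ)) / ‖U‖ := by
    have : (∑ j, x₀ j * V j) = (∑ j, U j * V j) / ‖U‖ + (∑ j, V j * V j) / ‖V‖ := by
      rw [Finset.sum_div, Finset.sum_div, ← Finset.sum_add_distrib]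
      congr 1; funext j; simp [hx₀]; ring
    rw [this, hnormV, ← hinner]
    field_simp
    ring
  have hApos : 0 < ∑ j, x₀ j * U j := by rw [hA]; positivity
  have hBpos : 0 < ∑ j, x₀ j * V j := by rw [hB]; positivity
  -- choose a large natural number b
  set SU : ℝ := ∑ j, |U j| with hSU
  set SV : ℝ := ∑ j, |V j| with hSV
  obtain ⟨b, hb⟩ := exists_nat_gt (max (SU / (∑ j, x₀ j * U j)) (SV / (∑ j, x₀ j * V j)))
  have hbU : SU < (b : ℝ) * ∑ j, x₀ j * U j := by
    have h1 : SU / (∑ j, x₀ j * U j) < (b : ℝ) := lt_of_le_of_lt (le_max_left _ _) hb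
    calc SU = SU / (∑ j, x₀ j * U j) * (∑ j, x₀ j * U j) := by field_simp
    _ < (b : ℝ) * ∑ j, x₀ j * U j := by exact mul_lt_mul_of_pos_right h1 hApos
  have hbV : SV < (b : ℝ) * ∑ j, x₀ j * V j := by
    have h1 : SV / (∑ j, x₀ j * V j) < (b : ℝ) := lt_of_le_of_lt (le_max_right _ _) hb
    calc SV = SV / (∑ j, x₀ j * V j) * (∑ j, x₀ j * V j) := by field_simp
    _ < (b : ℝ) * ∑ j, x₀ j * V j := by exact mul_lt_mul_of_pos_right h1 hBpos
  -- the integer approximation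
  set n : Fin d → ℤ := fun j => ⌊(b : ℝ) * x₀ j⌋ with hn
  have hfloor : ∀ j, |((n j : ℝ)) - (b : ℝ) * x₀ j| ≤ 1 := by
    intro j
    rw [abs_le]
    constructor
    · linarith [Int.sub_one_lt_floor ((b : ℝ) * x₀ j)]
    · linarith [Int.floor_le ((b : ℝ) * x₀ j)]
  -- key positivity for a centered vector against U (resp. V)
  have main : ∀ w : EuclideanSpace ℝ (Fin d), 0 < ∑ j, x₀ j * w j →
      (∑ j, |w j|) < (b : ℝ) * ∑ j, x₀ j * w j → 0 < ∑ j, (n j : ℝ) * w j := by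
    intro w _ hbw
    have hterm : ∀ j ∈ Finset.univ, (b : ℝ) * (x₀ j * w j) - |w j| ≤ (n j : ℝ) * w j := by
      intro j _
      have h1 : |((n j : ℝ) - (b : ℝ) * x₀ j) * w j| ≤ |w j| := by
        rw [abs_mul]
        calc |((n j : ℝ)) - (b : ℝ) * x₀ j| * |w j| ≤ 1 * |w j| :=
          mul_le_mul_of_nonneg_right (hfloor j) (abs_nonneg _)
        _ = |w j| := one_mul _
      have h2 := (abs_le.mp h1).1
      nlinarith [h2]
    have hsum := Finset.sum_le_sum hterm
    rw [Finset.sum_sub_distrib, ← Finset.mul_sum] at hsum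
    linarith
  have hnu : 0 < ∑ j, (n j : ℝ) * U j := main U hApos hbU
  have hnv : 0 < ∑ j, (n j : ℝ) * V j := main V hBpos hbV
  -- expansion identity
  have expand : ∀ w : Fin d → ℝ,
      (∑ j, ((((d : ℤ) * n j - ∑ i, n i) : ℤ) : ℝ) * w j)
        = (d : ℝ) * ∑ j, (n j : ℝ) * (w j - (∑ i, w i) / d) := by
    intro w
    have h1 : ∑ j, (n j : ℝ) * (w j - (∑ i, w i) / d)
        = (∑ j, (n j : ℝ) * w j) - (∑ j, (n j : ℝ)) * ((∑ i, w i) / d) := by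
      simp_rw [mul_sub]
      rw [Finset.sum_sub_distrib, Finset.sum_mul]
    have h2 : (∑ j, ((((d : ℤ) * n j - ∑ i, n i) : ℤ) : ℝ) * w j)
        = (d : ℝ) * (∑ j, (n j : ℝ) * w j) - (∑ j, (n j : ℝ)) * (∑ i, w i) := by
      have hterm : ∀ j, ((((d : ℤ) * n j - ∑ i, n i) : ℤ) : ℝ) * w j
          = (d : ℝ) * ((n j : ℝ) * w j) - (∑ i, (n i : ℝ)) * w j := by
        intro j; push_cast; ring
      simp_rw [hterm]
      rw [Finset.sum_sub_distrib, ← Finset.mul_sum, ← Finset.mul_sum]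
    rw [h1, h2]
    field_simp
  have hdpos : (0:ℝ) < d := by positivity
  -- define the integer vector
  refine ⟨fun j => (d : ℤ) * n j - ∑ i, n i, ?_, ?_, ?_⟩
  · simp [Finset.sum_sub_distrib, ← Finset.mul_sum, Finset.card_univ, mul_comm]
  · rw [expand u]
    exact mul_pos hdpos hnu
  · rw [expand v]
    exact mul_pos hdpos hnv
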